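/- Let $(g_n)_{n\in\mathbb{N}}$ be a sequence of measurable functions $g_n : [0,\infty) \to \mathbb{R}$, uniformly bounded by a constant $C \ge 0$, with $g_n(0)=0$ for all $n$, and suppose $\lim_{t\to 0^+} \sup_{n} |g_n(t)| = 0$. Then $\lim_{\alpha\to\infty} \sup_n \left| \alpha \int_0^\infty e^{-\alpha t} g_n(t)\,dt \right| = 0$. -/

import Mathlib

open Filter MeasureTheory Set

lemma aux_integral_exp_neg_mul (a : ℝ) {b : ℝ} (hb : 0 < b) :
    ∫ x in Ioi a, Real.exp (-b * x) = Real.exp (-b * a) / b := by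
  have hd : ∀ x ∈ Ici a, HasDerivAt (fun x => -(Real.exp (-b * x) / b))
      (Real.exp (-b * x)) x := by
    intro x _
    have h1 : HasDerivAt (fun x : ℝ => -b * x) (-b) x := by
      simpa using (hasDerivAt_id x).const_mul (-b)
    have h2 : HasDerivAt (fun x => Real.exp (-b * x)) (Real.exp (-b * x) * (-b)) x :=
      (Real.hasDerivAt_exp _).comp x h1
    have h3 := (h2.div_const b).neg
    rw [mul_neg, neg_div, neg_neg, mul_div_assoc, div_self hb.ne', mul_one] at h3
    exact h3
  have hlim : Tendsto (fun x : ℝ => -(Real.exp (-b * x) / b)) atTop (nhds 0) := by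
    have : Tendsto (fun x : ℝ => Real.exp (-b * x)) atTop (nhds 0) := by
      have h1 : Tendsto (fun x : ℝ => b * x) atTop atTop :=
        tendsto_id.const_mul_atTop hb
      have h2 := Real.tendsto_exp_neg_atTop_nhds_zero.comp h1
      have heq : (fun x : ℝ => Real.exp (-b * x))
          = (fun x => Real.exp (-x)) ∘ (fun x : ℝ => b * x) := by
        ext x; simp [Function.comp, neg_mul]
      rw [heq]; exact h2
    simpa using ((this.div_const b).neg)
  have := MeasureTheory.integral_Ioi_of_hasDerivAt_of_tendsto' hd
    (exp_neg_integrableOn_Ioi a hb) hlim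
  rw [this]
  ring

lemma aux_key (C ε d α : ℝ) (hC : 0 ≤ C) (hd : 0 < d) (hα : 0 < α)
    (f : ℝ → ℝ) (hm : Measurable f) (hbd : ∀ t, |f t| ≤ C)
    (hsmall : ∀ t ∈ Ioc (0:ℝ) d, |f t| ≤ ε) :
    |α * ∫ t in Ioi (0:ℝ), Real.exp (-α * t) * f t| ≤ ε + C * Real.exp (-α * d) := by
  have hεnn : 0 ≤ ε := le_trans (abs_nonneg _) (hsmall d ⟨hd, le_rfl⟩)
  have hexp : IntegrableOn (fun t => Real.exp (-α * t)) (Ioi (0:ℝ)) :=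
    exp_neg_integrableOn_Ioi 0 hα
  have hint : IntegrableOn (fun t => Real.exp (-α * t) * f t) (Ioi (0:ℝ)) := by
    have : IntegrableOn (fun x => f x * Real.exp (-α * x)) (Ioi 0) := hexp.bdd_mul hm.aestronglyMeasurable (c := C) (Filter.Eventually.of_forall fun x => by simpa using hbd x)
    simpa [mul_comm] using this
  have habs : IntegrableOn (fun t => |Real.exp (-α * t) * f t|) (Ioi (0:ℝ)) := hint.abs
  have husplit : Ioc (0:ℝ) d ∪ Ioi d = Ioi 0 := Ioc_union_Ioi_eq_Ioi hd.le
  -- bound the integral of the absolute value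
  have h1 : ∫ t in Ioc (0:ℝ) d, |Real.exp (-α * t) * f t|
      ≤ ∫ t in Ioc (0:ℝ) d, Real.exp (-α * t) * ε := by
    apply setIntegral_mono_on (habs.mono_set (husplit ▸ subset_union_left))
      ((hexp.mono_set (husplit ▸ subset_union_left)).mul_const ε) measurableSet_Ioc
    intro t ht
    rw [abs_mul, abs_of_pos (Real.exp_pos _)]
    exact mul_le_mul_of_nonneg_left (hsmall t ht) (Real.exp_pos _).le
  have h2 : ∫ t in Ioc (0:ℝ) d, Real.exp (-α * t) * ε ≤ ε / α := by
    have hle : ∫ t in Ioc (0:ℝ) d, Real.exp (-α * t) ≤ ∫ t in Ioi (0:ℝ), Real.exp (-α * t) :=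
      setIntegral_mono_set hexp (Filter.Eventually.of_forall fun t => (Real.exp_pos _).le)
        (HasSubset.Subset.eventuallyLE (husplit ▸ subset_union_left))
    rw [integral_mul_const]
    calc (∫ t in Ioc (0:ℝ) d, Real.exp (-α * t)) * ε
        ≤ (∫ t in Ioi (0:ℝ), Real.exp (-α * t)) * ε := by
          exact mul_le_mul_of_nonneg_right hle hεnn
      _ = ε / α := by rw [aux_integral_exp_neg_mul 0 hα]; simp; ring
  have h3 : ∫ t in Ioi d, |Real.exp (-α * t) * f t|
      ≤ C * Real.exp (-α * d) / α := by
    have : ∫ t in Ioi d, |Real.exp (-α * t) * f t|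
        ≤ ∫ t in Ioi d, Real.exp (-α * t) * C := by
      apply setIntegral_mono_on (habs.mono_set (husplit ▸ subset_union_right))
        ((hexp.mono_set (fun x hx => lt_trans hd hx)).mul_const C) measurableSet_Ioi
      intro t _
      rw [abs_mul, abs_of_pos (Real.exp_pos _)]
      exact mul_le_mul_of_nonneg_left (hbd t) (Real.exp_pos _).le
    rw [integral_mul_const, aux_integral_exp_neg_mul d hα] at this
    calc ∫ t in Ioi d, |Real.exp (-α * t) * f t| ≤ Real.exp (-α * d) / α * C := this
      _ = C * Real.exp (-α * d) / α := by ring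
  have hsum : ∫ t in Ioi (0:ℝ), |Real.exp (-α * t) * f t|
      ≤ ε / α + C * Real.exp (-α * d) / α := by
    rw [← husplit, setIntegral_union (Ioc_disjoint_Ioi le_rfl) measurableSet_Ioi
      (habs.mono_set (husplit ▸ subset_union_left))
      (habs.mono_set (husplit ▸ subset_union_right))]
    exact add_le_add (le_trans h1 h2) h3
  have hnorm : |∫ t in Ioi (0:ℝ), Real.exp (-α * t) * f t|
      ≤ ∫ t in Ioi (0:ℝ), |Real.exp (-α * t) * f t| := by
    have := MeasureTheory.norm_integral_le_integral_norm (μ := volume.restrict (Ioi (0:ℝ)))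
      (fun t => Real.exp (-α * t) * f t)
    simp only [Real.norm_eq_abs] at this
    exact this
  rw [abs_mul, abs_of_pos hα]
  calc α * |∫ t in Ioi (0:ℝ), Real.exp (-α * t) * f t|
      ≤ α * (ε / α + C * Real.exp (-α * d) / α) :=
        mul_le_mul_of_nonneg_left (le_trans hnorm hsum) hα.le
    _ = ε + C * Real.exp (-α * d) := by field_simp

theorem stmt_2 (g : ℕ → ℝ → ℝ) (C : ℝ) (hC : 0 ≤ C)
    (hbd : ∀ n t, |g n t| ≤ C)
    (hmeas : ∀ n, Measurable (g n)) (hg0 : ∀ n, g n 0 = 0)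
    (hrc : Tendsto (fun t => ⨆ n, |g n t|) (nhdsWithin 0 (Ioi 0)) (nhds 0)) :
    Tendsto (fun α : ℝ => ⨆ n, |α * ∫ t in Ioi (0:ℝ), Real.exp (-α * t) * g n t|)
      atTop (nhds 0) := by
  rw [Metric.tendsto_atTop]
  intro ε hε
  -- step 1: uniform smallness near 0
  obtain ⟨δ, hδpos, hδ⟩ := Metric.tendsto_nhdsWithin_nhds.1 hrc (ε/4) (by linarith)
  set d := δ / 2 with hd
  have hdpos : 0 < d := by positivity
  have hsmall : ∀ n, ∀ t ∈ Ioc (0:ℝ) d, |g n t| ≤ ε / 4 := by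
    intro n t ht
    have h1 : |g n t| ≤ ⨆ m, |g m t| :=
      le_ciSup ⟨C, fun x ⟨m, hm⟩ => hm ▸ hbd m t⟩ n
    have h2 : dist (⨆ m, |g m t|) 0 < ε / 4 := by
      apply hδ ht.1
      rw [Real.dist_eq, sub_zero, abs_of_pos ht.1]
      calc t ≤ d := ht.2
        _ < δ := by rw [hd]; linarith
    rw [Real.dist_eq, sub_zero] at h2
    exact le_trans h1 (le_trans (le_abs_self _) h2.le)
  -- step 2: choose N with C * exp (-α * d) < ε / 4 for α ≥ N
  have htend : Tendsto (fun α : ℝ => C * Real.exp (-α * d)) atTop (nhds 0) := by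
    have h1 : Tendsto (fun α : ℝ => α * d) atTop atTop :=
      tendsto_id.atTop_mul_const hdpos
    have h2 := Real.tendsto_exp_neg_atTop_nhds_zero.comp h1
    have h3 : Tendsto (fun α : ℝ => Real.exp (-α * d)) atTop (nhds 0) := by
      have heq : (fun α : ℝ => Real.exp (-α * d))
          = (fun x => Real.exp (-x)) ∘ (fun α : ℝ => α * d) := by
        ext x; simp [Function.comp, neg_mul]
      rw [heq]; exact h2
    simpa using h3.const_mul C
  obtain ⟨N₀, hN₀⟩ := (Metric.tendsto_atTop.1 htend) (ε/4) (by linarith)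
  refine ⟨max N₀ 1, fun α hα => ?_⟩
  have hα1 : (1:ℝ) ≤ α := le_trans (le_max_right _ _) hα
  have hαpos : 0 < α := lt_of_lt_of_le one_pos hα1
  have hCe : C * Real.exp (-α * d) < ε / 4 := by
    have := hN₀ α (le_trans (le_max_left _ _) hα)
    rwa [Real.dist_eq, sub_zero, abs_of_nonneg (by positivity)] at this
  have hub : ∀ n, |α * ∫ t in Ioi (0:ℝ), Real.exp (-α * t) * g n t| ≤ ε / 2 := by
    intro n
    have := aux_key C (ε/4) d α hC hdpos hαpos (g n) (hmeas n) (hbd n) (hsmall n)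
    linarith
  have hF : (⨆ n, |α * ∫ t in Ioi (0:ℝ), Real.exp (-α * t) * g n t|) ≤ ε / 2 :=
    ciSup_le hub
  have hFnn : 0 ≤ ⨆ n, |α * ∫ t in Ioi (0:ℝ), Real.exp (-α * t) * g n t| :=
    le_ciSup_of_le ⟨ε/2, fun x ⟨m, hm⟩ => hm ▸ hub m⟩ 0 (abs_nonneg _)
  rw [Real.dist_eq, sub_zero, abs_of_nonneg hFnn]
  linarith
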